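/- Let x1 ∈ (0,1) and x2 ∈ (1,∞) satisfy x1·e^{1-x1} = x2·e^{1-x2} (i.e., the logarithmic mean of x1 and x2 equals 1). Then x1 + x2 > 2 and x1·x2 < 1. -/

import Mathlib

open Real

private lemma fDeriv (x : ℝ) : HasDerivAt (fun x => x * Real.exp (1 - x)) ((1 - x) * Real.exp (1 - x)) x := by
  have h1 : HasDerivAt (fun x : ℝ => 1 - x) (-1) x := by
    simpa using (hasDerivAt_id x).const_sub (1:ℝ)
  have h2 : HasDerivAt (fun x : ℝ => Real.exp (1 - x)) (Real.exp (1 - x) * (-1)) x :=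
    (Real.hasDerivAt_exp _).comp x h1
  have h3 : HasDerivAt (fun y => y * Real.exp (1 - y))
      (1 * Real.exp (1 - x) + x * (Real.exp (1 - x) * -1)) x := (hasDerivAt_id x).mul h2
  convert h3 using 1
  ring

private lemma fAnti : StrictAntiOn (fun x => x * Real.exp (1 - x)) (Set.Ici 1) := by
  apply strictAntiOn_of_deriv_neg (convex_Ici 1)
  · exact (continuous_id.mul (Real.continuous_exp.comp (continuous_const.sub continuous_id))).continuousOn
  · intro x hx
    rw [interior_Ici] at hx
    rw [(fDeriv x).deriv]
    have he : (0:ℝ) < Real.exp (1 - x) := Real.exp_pos _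
    have : (1:ℝ) < x := hx
    nlinarith

private lemma lemB {t : ℝ} (ht : t ∈ Set.Ioo (0:ℝ) 1) :
    t * Real.exp (1 - t) < (2 - t) * Real.exp (t - 1) := by
  have hmono : StrictMonoOn (fun x => x * Real.exp (1 - x) - (2 - x) * Real.exp (x - 1)) (Set.Icc 0 1) := by
    apply strictMonoOn_of_deriv_pos (convex_Icc 0 1)
    · fun_prop
    · intro x hx
      rw [interior_Icc] at hx
      have hd : HasDerivAt (fun x => x * Real.exp (1 - x) - (2 - x) * Real.exp (x - 1))
          ((1 - x) * (Real.exp (1 - x) - Real.exp (x - 1))) x := by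
        have h1 : HasDerivAt (fun x : ℝ => x - 1) 1 x := by
          simpa using (hasDerivAt_id x).sub_const 1
        have h2 : HasDerivAt (fun x : ℝ => Real.exp (x - 1)) (Real.exp (x - 1) * 1) x :=
          (Real.hasDerivAt_exp _).comp x h1
        have h3 : HasDerivAt (fun x : ℝ => (2 - x) * Real.exp (x - 1))
            ((0 - 1) * Real.exp (x - 1) + (2 - x) * (Real.exp (x - 1) * 1)) x :=
          ((hasDerivAt_const x (2:ℝ)).sub (hasDerivAt_id x)).mul h2
        have h4 : HasDerivAt (fun x => x * Real.exp (1 - x) - (2 - x) * Real.exp (x - 1))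
            ((1 - x) * Real.exp (1 - x) - ((0 - 1) * Real.exp (x - 1) + (2 - x) * (Real.exp (x - 1) * 1))) x :=
          (fDeriv x).sub h3
        convert h4 using 1
        ring
      rw [hd.deriv]
      have h5 : Real.exp (x - 1) < Real.exp (1 - x) := Real.exp_lt_exp.mpr (by linarith [hx.2])
      nlinarith [hx.1, hx.2]
  have hlt : (fun x => x * Real.exp (1 - x) - (2 - x) * Real.exp (x - 1)) t
      < (fun x => x * Real.exp (1 - x) - (2 - x) * Real.exp (x - 1)) 1 :=
    hmono ⟨ht.1.le, ht.2.le⟩ ⟨zero_le_one, le_refl 1⟩ ht.2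
  simp only [sub_self, Real.exp_zero] at hlt
  norm_num at hlt
  linarith

private lemma lemC {t : ℝ} (ht : t ∈ Set.Ioo (0:ℝ) 1) :
    0 < 2 * Real.log t + t⁻¹ - t := by
  have hanti : StrictAntiOn (fun x => 2 * Real.log x + x⁻¹ - x) (Set.Icc t 1) := by
    apply strictAntiOn_of_deriv_neg (convex_Icc t 1)
    · intro x hx
      have hx0 : x ≠ 0 := ne_of_gt (lt_of_lt_of_le ht.1 hx.1)
      apply ContinuousAt.continuousWithinAt
      have hi : ContinuousAt (fun x : ℝ => x⁻¹) x := continuousAt_inv₀ hx0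
      exact (((Real.continuousAt_log hx0).const_mul 2).add hi).sub continuousAt_id
    · intro x hx
      rw [interior_Icc] at hx
      have hx0 : (0:ℝ) < x := lt_of_lt_of_le ht.1 hx.1.le
      have hd : HasDerivAt (fun x => 2 * Real.log x + x⁻¹ - x)
          (2 * x⁻¹ + (-(x^2)⁻¹) - 1) x := by
        exact (((Real.hasDerivAt_log (ne_of_gt hx0)).const_mul 2).add
          (hasDerivAt_inv (ne_of_gt hx0))).sub (hasDerivAt_id x)
      rw [hd.deriv]
      have heq : 2 * x⁻¹ + (-(x^2)⁻¹) - 1 = -((x - 1)^2) / x^2 := by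
        field_simp
        ring
      rw [heq]
      apply div_neg_of_neg_of_pos
      · nlinarith [pow_pos (show (0:ℝ) < 1 - x by linarith [hx.2]) 2]
      · positivity
  have hlt : (fun x => 2 * Real.log x + x⁻¹ - x) 1 < (fun x => 2 * Real.log x + x⁻¹ - x) t :=
    hanti ⟨le_refl t, ht.2.le⟩ ⟨ht.2.le, le_refl 1⟩ ht.2
  simp only [Real.log_one, inv_one] at hlt
  norm_num at hlt
  linarith

theorem stmt12 (x1 x2 : ℝ) (h1 : x1 ∈ Set.Ioo (0:ℝ) 1) (h2 : x2 ∈ Set.Ioi (1:ℝ))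
    (h : x1 * Real.exp (1 - x1) = x2 * Real.exp (1 - x2)) :
    2 < x1 + x2 ∧ x1 * x2 < 1 := by
  obtain ⟨hx1a, hx1b⟩ := h1
  have hx2 : (1:ℝ) < x2 := h2
  constructor
  · by_contra hc
    push_neg at hc
    have h2x : x2 ≤ 2 - x1 := by linarith
    have hB := lemB ⟨hx1a, hx1b⟩
    have hmem2 : x2 ∈ Set.Ici (1:ℝ) := hx2.le
    have hmem1 : 2 - x1 ∈ Set.Ici (1:ℝ) := by simp; linarith
    have hf : (2 - x1) * Real.exp (1 - (2 - x1)) ≤ x2 * Real.exp (1 - x2) := by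
      rcases eq_or_lt_of_le h2x with he | hlt
      · rw [he]
      · exact le_of_lt (fAnti hmem2 hmem1 hlt)
    have hr : 1 - (2 - x1) = x1 - 1 := by ring
    rw [hr] at hf
    linarith
  · by_contra hc
    push_neg at hc
    have hinv : (1:ℝ) < x1⁻¹ := by
      have hm := mul_inv_cancel₀ (ne_of_gt hx1a)
      have hip : (0:ℝ) < x1⁻¹ := inv_pos.mpr hx1a
      nlinarith
    have hle : x1⁻¹ ≤ x2 := by
      rw [inv_eq_one_div, div_le_iff₀ hx1a]
      linarith [mul_comm x1 x2, hc]
    have hC := lemC ⟨hx1a, hx1b⟩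
    have key : x1⁻¹ * Real.exp (1 - x1⁻¹) < x1 * Real.exp (1 - x1) := by
      have h5 : 1 < Real.exp (2 * Real.log x1 + x1⁻¹ - x1) := by
        rw [← Real.exp_zero]
        exact Real.exp_lt_exp.mpr hC
      have h6 : Real.exp (2 * Real.log x1 + x1⁻¹ - x1) = x1^2 * Real.exp (x1⁻¹ - x1) := by
        rw [show 2 * Real.log x1 + x1⁻¹ - x1 = Real.log x1 + Real.log x1 + (x1⁻¹ - x1) by ring,
            Real.exp_add, Real.exp_add, Real.exp_log hx1a]
        ring
      have h7 : x1 * Real.exp (1 - x1) = (x1⁻¹ * Real.exp (1 - x1⁻¹)) * (x1^2 * Real.exp (x1⁻¹ - x1)) := by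
        rw [show (x1⁻¹ * Real.exp (1 - x1⁻¹)) * (x1^2 * Real.exp (x1⁻¹ - x1))
            = (x1⁻¹ * x1^2) * (Real.exp (1 - x1⁻¹) * Real.exp (x1⁻¹ - x1)) by ring,
           ← Real.exp_add, show (1 - x1⁻¹) + (x1⁻¹ - x1) = 1 - x1 by ring]
        have : x1⁻¹ * x1^2 = x1 := by
          rw [sq]
          field_simp
        rw [this]
      have hpos : 0 < x1⁻¹ * Real.exp (1 - x1⁻¹) := by positivity
      nlinarith [h5, h6, h7, hpos]
    have hmem2 : x2 ∈ Set.Ici (1:ℝ) := hx2.le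
    have hmem1 : x1⁻¹ ∈ Set.Ici (1:ℝ) := hinv.le
    have hf : x2 * Real.exp (1 - x2) ≤ x1⁻¹ * Real.exp (1 - x1⁻¹) := by
      rcases eq_or_lt_of_le hle with he | hlt
      · rw [← he]
      · exact le_of_lt (fAnti hmem1 hmem2 hlt)
    linarith
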